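/- Let R be a commutative ring and ν, h, φ, χ, c ∈ R. Substituting a₁ = 6ν, a₂ = 9ν² + 3h, a₃ = 9ν² + 3h + cφ, a₄ = 2ν(5ν² + 3h) + c(χ + νφ) into the polynomial x³ + y³ - a₁xy - a₂x - a₃y - a₄ ∈ R[x,y], and then setting c = 0, the resulting polynomial x³ + y³ - 6νxy - (9ν²+3h)(x+y) - 2ν(5ν²+3h) vanishes together with all its first partial derivatives in x and y at every point (x₀, y₀) satisfying x₀ + y₀ + 2ν = 0 and h = (y₀ + ν)². -/
import Mathlib


/-- The `c = 0` member of the `E₆` weak coupling limit family,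
`P(x,y) = x³ + y³ - 6νxy - (9ν²+3h)(x+y) - 2ν(5ν²+3h)`, vanishes together with
its partial derivatives in `x` and `y` at every point `(x₀, y₀)` with
`x₀ + y₀ + 2ν = 0` and `h = (y₀ + ν)²`. -/
theorem E6_central_fiber_singular (ν h x₀ y₀ : ℂ)
    (h₁ : x₀ + y₀ + 2*ν = 0) (h₂ : h = (y₀ + ν)^2)
    (P : ℂ → ℂ → ℂ)
    (hP : ∀ x y : ℂ, P x y =
      x^3 + y^3 - 6*ν*x*y - (9*ν^2 + 3*h)*(x + y) - 2*ν*(5*ν^2 + 3*h)) :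
    P x₀ y₀ = 0 ∧
    deriv (fun x : ℂ => P x y₀) x₀ = 0 ∧
    deriv (fun y : ℂ => P x₀ y) y₀ = 0 := by
  have hx : x₀ = -y₀ - 2*ν := by linear_combination h₁
  have hPx : (fun x : ℂ => P x y₀) = fun x : ℂ =>
      x^3 + y₀^3 - 6*ν*x*y₀ - (9*ν^2 + 3*h)*(x + y₀) - 2*ν*(5*ν^2 + 3*h) := by
    funext x; exact hP x y₀
  have hPy : (fun y : ℂ => P x₀ y) = fun y : ℂ =>
      x₀^3 + y^3 - 6*ν*x₀*y - (9*ν^2 + 3*h)*(x₀ + y) - 2*ν*(5*ν^2 + 3*h) := by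
    funext y; exact hP x₀ y
  refine ⟨?_, ?_, ?_⟩
  · rw [hP]; subst hx h₂; ring
  · rw [hPx]
    have : deriv (fun x : ℂ =>
        x^3 + y₀^3 - 6*ν*x*y₀ - (9*ν^2 + 3*h)*(x + y₀) - 2*ν*(5*ν^2 + 3*h)) x₀
        = 3*x₀^2 - 6*ν*y₀ - (9*ν^2 + 3*h) := by
      have := ((hasDerivAt_pow 3 x₀).sub_const 0)
      have hd : HasDerivAt (fun x : ℂ =>
          x^3 + y₀^3 - 6*ν*x*y₀ - (9*ν^2 + 3*h)*(x + y₀) - 2*ν*(5*ν^2 + 3*h))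
          (3*x₀^2 - 6*ν*y₀ - (9*ν^2 + 3*h)) x₀ := by
        have h1 : HasDerivAt (fun x : ℂ => x^3) (3*x₀^2) x₀ := by
          simpa using hasDerivAt_pow 3 x₀
        have h2 : HasDerivAt (fun x : ℂ => 6*ν*x*y₀) (6*ν*y₀) x₀ := by
          simpa [mul_comm, mul_assoc, mul_left_comm] using
            ((hasDerivAt_id x₀).const_mul (6*ν*y₀))
        have h3 : HasDerivAt (fun x : ℂ => (9*ν^2 + 3*h)*(x + y₀))
            (9*ν^2 + 3*h) x₀ := by
          simpa using (((hasDerivAt_id x₀).add_const y₀).const_mul (9*ν^2 + 3*h))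
        simpa using (((h1.add_const (y₀^3)).sub h2).sub h3).sub_const (2*ν*(5*ν^2 + 3*h))
      exact hd.deriv
    rw [this]; subst hx h₂; ring
  · rw [hPy]
    have hd : HasDerivAt (fun y : ℂ =>
        x₀^3 + y^3 - 6*ν*x₀*y - (9*ν^2 + 3*h)*(x₀ + y) - 2*ν*(5*ν^2 + 3*h))
        (3*y₀^2 - 6*ν*x₀ - (9*ν^2 + 3*h)) y₀ := by
      have h1 : HasDerivAt (fun y : ℂ => y^3) (3*y₀^2) y₀ := by
        simpa using hasDerivAt_pow 3 y₀
      have h2 : HasDerivAt (fun y : ℂ => 6*ν*x₀*y) (6*ν*x₀) y₀ := by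
        simpa using ((hasDerivAt_id y₀).const_mul (6*ν*x₀))
      have h3 : HasDerivAt (fun y : ℂ => (9*ν^2 + 3*h)*(x₀ + y))
          (9*ν^2 + 3*h) y₀ := by
        simpa using (((hasDerivAt_id y₀).const_add x₀).const_mul (9*ν^2 + 3*h))
      simpa using ((((h1.const_add (x₀^3)).sub h2).sub h3).sub_const (2*ν*(5*ν^2 + 3*h)))
    rw [hd.deriv]; subst hx h₂; ring
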